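/- There is an injective group homomorphism from the presented group P₄ = ⟨x, y | x⁴, y², (xy)⁴⟩ into the group of affine isometries of the Euclidean plane sending x to c(v) = R_{π/2} v and y to d(v) = R_{π} v + (1,0); i.e., this assignment defines a faithful representation of π₁^orb(S²(2,4,4)) into Isom(E²). -/

import Mathlib

open Real

/-- The Euclidean plane `E²`. -/
abbrev E2 : Type := EuclideanSpace ℝ (Fin 2)

/-- The vector `(x, y)` of the Euclidean plane. -/
def vecE (x y : ℝ) : E2 := WithLp.toLp 2 ![x, y]

/-- Rotation of the Euclidean plane:
`R_θ(x,y) = (x cos θ + y sin θ, −x sin θ + y cos θ)`. -/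
noncomputable def rotE (θ : ℝ) (v : E2) : E2 :=
  vecE (v 0 * Real.cos θ + v 1 * Real.sin θ) (-v 0 * Real.sin θ + v 1 * Real.cos θ)

/-- Relators of `P₄ = ⟨x, y | x⁴, y², (xy)⁴⟩`, the fundamental group of `S²(2,4,4)`. -/
def relsP4 : Set (FreeGroup (Fin 2)) :=
  {(FreeGroup.of 0) ^ 4, (FreeGroup.of 1) ^ 2, (FreeGroup.of 0 * FreeGroup.of 1) ^ 4}

/-- `P₄ = ⟨x, y | x⁴, y², (xy)⁴⟩`. -/
abbrev P4 : Type := PresentedGroup relsP4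

/-! ### Auxiliary: the group `ℤ² ⋊ ℤ/4` -/

abbrev NN : Type := Multiplicative (ℤ × ℤ)
abbrev HH : Type := Multiplicative (ZMod 4)

def Jadd : ℤ × ℤ ≃+ ℤ × ℤ where
  toFun p := (p.2, -p.1)
  invFun p := (-p.2, p.1)
  left_inv p := by simp
  right_inv p := by simp
  map_add' p q := by simp [Prod.add_def]; ring

def Jm : MulAut NN := AddEquiv.toMultiplicative Jadd
lemma Jm_apply' (m : NN) : Jm m = .ofAdd (m.toAdd.2, -m.toAdd.1) := rfl
lemma Jm_pow4 : Jm ^ 4 = 1 := by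
  ext n : 1; show (Jm ^ 4) n = n; simp [pow_succ, MulAut.mul_apply, Jm_apply']
lemma pow_mod4 {M : Type*} [Monoid M] (x : M) (hx : x ^ 4 = 1) (m : ℕ) :
    x ^ m = x ^ (m % 4) := by
  conv_lhs => rw [← Nat.div_add_mod m 4]
  rw [pow_add, pow_mul, hx, one_pow, one_mul]
def powHom {M : Type*} [Monoid M] (x : M) (hx : x ^ 4 = 1) : HH →* M where
  toFun k := x ^ (k.toAdd).val
  map_one' := by simp
  map_mul' a b := by
    show x ^ (a.toAdd + b.toAdd).val = _
    rw [ZMod.val_add, ← pow_mod4 x hx, pow_add]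
def actHom : HH →* MulAut NN := powHom Jm Jm_pow4
abbrev GG : Type := SemidirectProduct NN HH actHom

instance : DecidableEq GG := fun a b =>
  decidable_of_iff (a.left = b.left ∧ a.right = b.right)
    ⟨fun ⟨h1, h2⟩ => SemidirectProduct.ext h1 h2, fun h => by subst h; exact ⟨rfl, rfl⟩⟩

/-! ### Generic homomorphisms out of `GG` -/

section generic
variable {P : Type*} [Group P] (t1 t2 X : P) (hc : Commute t1 t2) (hX : X ^ 4 = 1)
  (h1 : X * t1 * X⁻¹ = t2⁻¹) (h2 : X * t2 * X⁻¹ = t1)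

def tHom : NN →* P where
  toFun n := t1 ^ (n.toAdd).1 * t2 ^ (n.toAdd).2
  map_one' := by simp
  map_mul' a b := by
    show t1 ^ (a.toAdd + b.toAdd).1 * t2 ^ (a.toAdd + b.toAdd).2 =
      (t1 ^ a.toAdd.1 * t2 ^ a.toAdd.2) * (t1 ^ b.toAdd.1 * t2 ^ b.toAdd.2)
    have h := (hc.symm.zpow_zpow a.toAdd.2 b.toAdd.1).eq
    simp only [Prod.fst_add, Prod.snd_add, zpow_add, mul_assoc]
    congr 1
    rw [← mul_assoc, ← h, mul_assoc]

lemma tHom_apply (a b : ℤ) : tHom t1 t2 hc (.ofAdd (a, b)) = t1 ^ a * t2 ^ b := rfl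

lemma conj_mul' {x u v : P} : x * (u * v) * x⁻¹ = (x * u * x⁻¹) * (x * v * x⁻¹) := by group

include h1 h2 in
lemma tHom_base (n : NN) : tHom t1 t2 hc (Jm n) = X * tHom t1 t2 hc n * X⁻¹ := by
  rw [← ofAdd_toAdd n]
  obtain ⟨a, b⟩ := n.toAdd
  have hJ : Jm (Multiplicative.ofAdd (a, b)) = .ofAdd (b, -a) := rfl
  rw [hJ, tHom_apply, tHom_apply, conj_mul', ← conj_zpow, ← conj_zpow, h1, h2,
    inv_zpow, ← zpow_neg]
  exact (hc.zpow_zpow b (-a)).eq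

include h1 h2 in
lemma tHom_pow (m : ℕ) (n : NN) :
    tHom t1 t2 hc ((Jm ^ m) n) = X ^ m * tHom t1 t2 hc n * (X ^ m)⁻¹ := by
  induction m generalizing n with
  | zero => simp
  | succ k ih =>
    rw [pow_succ, MulAut.mul_apply, ih (Jm n), tHom_base t1 t2 X hc h1 h2]
    group

include hX h1 h2 in
lemma compat : ∀ g : HH, (tHom t1 t2 hc).comp (actHom g).toMonoidHom =
    (MulAut.conj (powHom X hX g)).toMonoidHom.comp (tHom t1 t2 hc) := by
  intro g
  ext n
  show tHom t1 t2 hc (actHom g n) = powHom X hX g * tHom t1 t2 hc n * (powHom X hX g)⁻¹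
  have h1' : actHom g = Jm ^ (g.toAdd.val) := rfl
  have h2' : powHom X hX g = X ^ g.toAdd.val := rfl
  rw [h1', h2']
  exact tHom_pow t1 t2 X hc h1 h2 _ n

def mk244 : GG →* P :=
  SemidirectProduct.lift (tHom t1 t2 hc) (powHom X hX) (compat t1 t2 X hc hX h1 h2)

lemma mk244_mk (a b : ℤ) (k : ZMod 4) :
    mk244 t1 t2 X hc hX h1 h2 ⟨.ofAdd (a, b), .ofAdd k⟩ = t1 ^ a * t2 ^ b * X ^ k.val := by
  rw [SemidirectProduct.mk_eq_inl_mul_inr, map_mul]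
  simp only [mk244, SemidirectProduct.lift_inl, SemidirectProduct.lift_inr, tHom_apply]
  rfl

end generic

/-! ### The copy of the data inside `P4` -/

namespace P4side

def x : P4 := PresentedGroup.of 0
def y : P4 := PresentedGroup.of 1

lemma rel_one {r : FreeGroup (Fin 2)} (h : r ∈ relsP4) : PresentedGroup.mk relsP4 r = 1 := by
  apply (QuotientGroup.eq_one_iff _).mpr
  exact Subgroup.subset_normalClosure h

lemma relx : x ^ 4 = 1 := by
  have : (x ^ 4 : P4) = PresentedGroup.mk relsP4 ((FreeGroup.of 0) ^ 4) := by
    rw [map_pow]; rfl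
  rw [this]; exact rel_one (by left; rfl)

lemma rely : y ^ 2 = 1 := by
  have : (y ^ 2 : P4) = PresentedGroup.mk relsP4 ((FreeGroup.of 1) ^ 2) := by
    rw [map_pow]; rfl
  rw [this]; exact rel_one (by right; left; rfl)

lemma relxy : (x * y) ^ 4 = 1 := by
  have : ((x * y) ^ 4 : P4) = PresentedGroup.mk relsP4 ((FreeGroup.of 0 * FreeGroup.of 1) ^ 4) := by
    rw [map_pow, map_mul]; rfl
  rw [this]; exact rel_one (by right; right; rfl)

lemma e1 : x⁻¹ = x ^ 3 :=
  inv_eq_of_mul_eq_one_right (by rw [← pow_succ']; exact relx)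

lemma e2 : y⁻¹ = y :=
  inv_eq_of_mul_eq_one_right (by rw [← sq]; exact rely)

lemma e3 : (x⁻¹) ^ 3 = x := by
  rw [e1, ← pow_mul, pow_mod4 x relx]; norm_num

lemma key : x * y * (x * y) = y * x ^ 3 * (y * x ^ 3) := by
  have k1 : x * y * (x * y) * (x * y * (x * y)) = 1 := by
    have h := relxy
    rw [show ((x * y) ^ 4 : P4) = x * y * (x * y) * (x * y * (x * y)) from by
      rw [pow_succ, pow_succ, pow_succ, pow_one]; group] at h
    exact h
  have k2 : x * y * (x * y) = (x * y * (x * y))⁻¹ := eq_inv_of_mul_eq_one_left k1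
  calc x * y * (x * y) = (x * y * (x * y))⁻¹ := k2
    _ = y⁻¹ * x⁻¹ * (y⁻¹ * x⁻¹) := by group
    _ = y * x ^ 3 * (y * x ^ 3) := by rw [e1, e2]

def T1 : P4 := y * x ^ 2
def T2 : P4 := x⁻¹ * (y * x ^ 2) * x

lemma hcT : Commute T1 T2 := by
  unfold Commute SemiconjBy T1 T2
  have A : (y * x ^ 2) * (x⁻¹ * (y * x ^ 2) * x) = y * x * (y * x ^ 3) := by group
  have B : (x⁻¹ * (y * x ^ 2) * x) * (y * x ^ 2) = x⁻¹ * (y * x ^ 3 * (y * x ^ 3)) * x⁻¹ := by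
    group
  have C : (x⁻¹ : P4) * (y * x ^ 3 * (y * x ^ 3)) * x⁻¹ = x⁻¹ * (x * y * (x * y)) * x⁻¹ := by
    rw [← key]
  have D : (x⁻¹ : P4) * (x * y * (x * y)) * x⁻¹ = y * x * (y * x⁻¹) := by group
  have E : y * x * (y * x⁻¹) = y * x * (y * x ^ 3) := by rw [e1]
  rw [A, B, C, D, E]

lemma h1T : x * T1 * x⁻¹ = T2⁻¹ := by
  unfold T1 T2
  calc x * (y * x ^ 2) * x⁻¹ = x * y * x := by group
    _ = (x⁻¹) ^ 3 * y⁻¹ * x := by rw [e3, e2]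
    _ = (x⁻¹ * (y * x ^ 2) * x)⁻¹ := by group

lemma h2T : x * T2 * x⁻¹ = T1 := by
  unfold T1 T2; group

noncomputable def σ : GG →* P4 := mk244 T1 T2 x hcT relx h1T h2T

end P4side

/-! ### The map `P4 → GG` -/

def fGen : Fin 2 → GG := ![⟨1, .ofAdd 1⟩, ⟨.ofAdd (1, 0), .ofAdd 2⟩]

lemma relsHold : ∀ r ∈ relsP4, FreeGroup.lift fGen r = 1 := by
  intro r hr
  rcases hr with h | h | h
  · subst h; rw [map_pow, FreeGroup.lift_apply_of]
    show ((⟨1, .ofAdd 1⟩ : GG)) ^ 4 = 1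
    decide
  · subst h; rw [map_pow, FreeGroup.lift_apply_of]
    show ((⟨.ofAdd (1, 0), .ofAdd 2⟩ : GG)) ^ 2 = 1
    decide
  · rw [Set.mem_singleton_iff] at h; subst h
    rw [map_pow, map_mul, FreeGroup.lift_apply_of, FreeGroup.lift_apply_of]
    show ((⟨1, .ofAdd 1⟩ : GG) * ⟨.ofAdd (1, 0), .ofAdd 2⟩) ^ 4 = 1
    decide

def pi4 : P4 →* GG := PresentedGroup.toGroup relsHold

lemma sigma_pi : (P4side.σ).comp pi4 = MonoidHom.id P4 := by
  apply PresentedGroup.ext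
  intro i
  fin_cases i
  · show P4side.σ (pi4 (PresentedGroup.of 0)) = PresentedGroup.of 0
    rw [pi4, PresentedGroup.toGroup.of]
    show P4side.σ ⟨.ofAdd ((0 : ℤ), (0 : ℤ)), .ofAdd 1⟩ = _
    rw [P4side.σ, mk244_mk]
    show 1 * 1 * P4side.x ^ (1 : ZMod 4).val = _
    rw [one_mul, one_mul]
    rfl
  · show P4side.σ (pi4 (PresentedGroup.of 1)) = PresentedGroup.of 1
    rw [pi4, PresentedGroup.toGroup.of]
    show P4side.σ ⟨.ofAdd ((1 : ℤ), (0 : ℤ)), .ofAdd 2⟩ = _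
    rw [P4side.σ, mk244_mk]
    show P4side.T1 ^ (1 : ℤ) * 1 * P4side.x ^ (2 : ZMod 4).val = _
    rw [zpow_one, mul_one]
    show (P4side.y * P4side.x ^ 2) * P4side.x ^ 2 = _
    rw [mul_assoc, ← pow_add, P4side.relx, mul_one]
    rfl

lemma pi4_injective : Function.Injective pi4 := by
  have h : Function.LeftInverse P4side.σ pi4 := fun p => by
    have := congrArg (fun f : P4 →* P4 => f p) sigma_pi
    simpa using this
  exact h.injective

/-! ### The isometries -/

@[simp] lemma vecE_0 (a b : ℝ) : vecE a b 0 = a := by simp [vecE]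
@[simp] lemma vecE_1 (a b : ℝ) : vecE a b 1 = b := by simp [vecE]

noncomputable def cI : E2 ≃ᵢ E2 where
  toFun v := vecE (v 1) (-(v 0))
  invFun v := vecE (-(v 1)) (v 0)
  left_inv v := by ext i; fin_cases i <;> simp [vecE]
  right_inv v := by ext i; fin_cases i <;> simp [vecE]
  isometry_toFun := Isometry.of_dist_eq fun v w => by
    rw [EuclideanSpace.dist_eq, EuclideanSpace.dist_eq]
    congr 1
    simp only [Fin.sum_univ_two, Real.dist_eq, vecE_0, vecE_1, sq_abs]
    ring

lemma cI_apply (v : E2) : cI v = vecE (v 1) (-(v 0)) := rfl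
lemma cI_symm_apply (v : E2) : (cI⁻¹ : E2 ≃ᵢ E2) v = vecE (-(v 1)) (v 0) := rfl

noncomputable def t1I : E2 ≃ᵢ E2 := IsometryEquiv.constVAdd (vecE 1 0)
noncomputable def t2I : E2 ≃ᵢ E2 := IsometryEquiv.constVAdd (vecE 0 1)
lemma t1I_apply (v : E2) : t1I v = vecE 1 0 + v := rfl
lemma t2I_apply (v : E2) : t2I v = vecE 0 1 + v := rfl
lemma t1I_symm_apply (v : E2) : (t1I⁻¹ : E2 ≃ᵢ E2) v = -vecE 1 0 + v := by
  show (IsometryEquiv.constVAdd (X := E2) (vecE 1 0)).symm v = _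
  rw [IsometryEquiv.constVAdd_symm]
  rfl

lemma E2_add_apply (u w : E2) (i : Fin 2) : (u + w) i = u i + w i := rfl
lemma E2_neg_apply (u : E2) (i : Fin 2) : (-u) i = -(u i) := rfl
lemma E2_zero_apply (i : Fin 2) : (0 : E2) i = 0 := rfl

lemma cI4 : cI ^ 4 = 1 := by
  refine IsometryEquiv.ext fun v => ?_
  show (cI ^ 4) v = v
  rw [show (cI ^ 4 : E2 ≃ᵢ E2) = cI * cI * cI * cI from by
    rw [pow_succ, pow_succ, pow_succ, pow_one]]
  simp only [IsometryEquiv.mul_apply, cI_apply]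
  ext i; fin_cases i <;> simp

lemma hcI : Commute t1I t2I := by
  unfold Commute SemiconjBy
  refine IsometryEquiv.ext fun v => ?_
  show (t1I * t2I) v = (t2I * t1I) v
  simp only [IsometryEquiv.mul_apply, t1I_apply, t2I_apply]
  ext i; fin_cases i <;> simp [E2_add_apply] <;> ring

lemma h1I : cI * t1I * cI⁻¹ = t2I⁻¹ := by
  rw [eq_inv_iff_mul_eq_one]
  refine IsometryEquiv.ext fun v => ?_
  show (cI * t1I * cI⁻¹ * t2I) v = v
  simp only [IsometryEquiv.mul_apply, cI_apply, t1I_apply, t2I_apply, cI_symm_apply]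
  ext i; fin_cases i <;> simp [E2_add_apply, vecE] <;> ring

lemma h2I : cI * t2I * cI⁻¹ = t1I := by
  refine IsometryEquiv.ext fun v => ?_
  show (cI * t2I * cI⁻¹) v = t1I v
  simp only [IsometryEquiv.mul_apply, cI_apply, t2I_apply, cI_symm_apply, t1I_apply]
  ext i; fin_cases i <;> simp [E2_add_apply, vecE] <;> ring

noncomputable def iota : GG →* (E2 ≃ᵢ E2) := mk244 t1I t2I cI hcI cI4 h1I h2I

lemma cI_pow_zero (m : ℕ) : (cI ^ m) (0 : E2) = 0 := by
  induction m with
  | zero => rfl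
  | succ k ih =>
    rw [pow_succ', IsometryEquiv.mul_apply, ih, show cI (0 : E2) = 0 from by
      rw [cI_apply]; ext i; fin_cases i <;> simp]

lemma t1I_zpow_apply (a : ℤ) (v : E2) : (t1I ^ a) v = (a : ℝ) • vecE 1 0 + v := by
  induction a using Int.induction_on generalizing v with
  | zero => simp
  | succ k ih =>
    rw [zpow_add_one, IsometryEquiv.mul_apply, ih, t1I_apply]
    push_cast
    ext i; fin_cases i <;> simp [E2_add_apply, PiLp.smul_apply] <;> ring
  | pred k ih =>
    rw [zpow_sub_one, IsometryEquiv.mul_apply, t1I_symm_apply, ih]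
    push_cast
    ext i; fin_cases i <;> simp [E2_add_apply, E2_neg_apply, PiLp.smul_apply] <;> ring_nf

lemma t2I_zpow_apply (b : ℤ) (v : E2) : (t2I ^ b) v = (b : ℝ) • vecE 0 1 + v := by
  induction b using Int.induction_on generalizing v with
  | zero => simp
  | succ k ih =>
    rw [zpow_add_one, IsometryEquiv.mul_apply, ih, t2I_apply]
    push_cast
    ext i; fin_cases i <;> simp [E2_add_apply, PiLp.smul_apply] <;> ring
  | pred k ih =>
    have hsymm : ∀ w : E2, (t2I⁻¹ : E2 ≃ᵢ E2) w = -vecE 0 1 + w := fun w => by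
      show (IsometryEquiv.constVAdd (X := E2) (vecE 0 1)).symm _ = _
      rw [IsometryEquiv.constVAdd_symm]
      rfl
    rw [zpow_sub_one, IsometryEquiv.mul_apply, hsymm, ih]
    push_cast
    ext i; fin_cases i <;> simp [E2_add_apply, E2_neg_apply, PiLp.smul_apply] <;> ring_nf

lemma iota_eval0 (a b : ℤ) (k : ZMod 4) :
    iota ⟨.ofAdd (a, b), .ofAdd k⟩ (0 : E2) = vecE (a : ℝ) (b : ℝ) := by
  rw [iota, mk244_mk]
  rw [IsometryEquiv.mul_apply, IsometryEquiv.mul_apply, cI_pow_zero, t2I_zpow_apply,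
    t1I_zpow_apply]
  ext i; fin_cases i <;> simp [E2_add_apply, PiLp.smul_apply]

lemma iota_injective : Function.Injective iota := by
  rw [injective_iff_map_eq_one]
  intro g hg
  obtain ⟨n, k⟩ := g
  rw [← ofAdd_toAdd n, ← ofAdd_toAdd k] at hg ⊢
  generalize hp : n.toAdd = p at hg ⊢
  generalize hq : k.toAdd = κ at hg ⊢
  obtain ⟨a, b⟩ := p
  have h0 : iota ⟨.ofAdd (a, b), .ofAdd κ⟩ (0 : E2) = (0 : E2) := by rw [hg]; rfl
  rw [iota_eval0] at h0
  have ha' : a = 0 := by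
    have e : vecE (a : ℝ) (b : ℝ) 0 = (0 : E2) 0 := by rw [h0]
    rw [vecE_0, E2_zero_apply] at e; simpa using e
  have hb' : b = 0 := by
    have e : vecE (a : ℝ) (b : ℝ) 1 = (0 : E2) 1 := by rw [h0]
    rw [vecE_1, E2_zero_apply] at e; simpa using e
  subst ha' hb'
  rw [iota, mk244_mk] at hg
  simp only [zpow_zero, one_mul] at hg
  suffices hk : κ = 0 by
    rw [hk]; rfl
  fin_cases κ
  · rfl
  · exfalso
    have hg1 : cI ^ 1 = (1 : E2 ≃ᵢ E2) := hg
    have e := congrArg (fun f : E2 ≃ᵢ E2 => (f (vecE 1 0) : E2) 0) hg1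
    simp only [pow_one, cI_apply, IsometryEquiv.coe_one, id] at e
    norm_num at e
  · exfalso
    have hg1 : cI ^ 2 = (1 : E2 ≃ᵢ E2) := hg
    rw [sq] at hg1
    have e := congrArg (fun f : E2 ≃ᵢ E2 => (f (vecE 1 0) : E2) 0) hg1
    simp only [IsometryEquiv.mul_apply, cI_apply, IsometryEquiv.coe_one, id] at e
    norm_num at e
  · exfalso
    have hg1 : cI ^ 3 = (1 : E2 ≃ᵢ E2) := hg
    rw [pow_succ, sq] at hg1
    have e := congrArg (fun f : E2 ≃ᵢ E2 => (f (vecE 1 0) : E2) 1) hg1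
    simp only [IsometryEquiv.mul_apply, cI_apply, IsometryEquiv.coe_one, id] at e
    norm_num at e

/-- There is an injective (i.e. faithful) homomorphism `P₄ → Isom(E²)` sending the
generator `x` to `c(v) = R_{π/2} v` and the generator `y` to `d(v) = R_π v + (1,0)`. -/
theorem stmt7 :
    ∃ φ : P4 →* (E2 ≃ᵢ E2),
      Function.Injective φ ∧
      (∀ v : E2, φ (PresentedGroup.of 0) v = rotE (π / 2) v) ∧
      (∀ v : E2, φ (PresentedGroup.of 1) v = rotE π v + vecE 1 0) := by
  refine ⟨iota.comp pi4, iota_injective.comp pi4_injective, fun v => ?_, fun v => ?_⟩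
  · show iota (pi4 (PresentedGroup.of 0)) v = _
    rw [pi4, PresentedGroup.toGroup.of]
    show iota ⟨.ofAdd ((0 : ℤ), (0 : ℤ)), .ofAdd 1⟩ v = _
    rw [iota, mk244_mk]
    simp only [zpow_zero, one_mul]
    show (cI ^ (1 : ZMod 4).val) v = _
    rw [show (1 : ZMod 4).val = 1 from rfl, pow_one, cI_apply]
    ext i
    fin_cases i <;> simp [rotE, Real.cos_pi_div_two, Real.sin_pi_div_two]
  · show iota (pi4 (PresentedGroup.of 1)) v = _
    rw [pi4, PresentedGroup.toGroup.of]
    show iota ⟨.ofAdd ((1 : ℤ), (0 : ℤ)), .ofAdd 2⟩ v = _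
    rw [iota, mk244_mk]
    simp only [zpow_zero, zpow_one, mul_one]
    show (t1I * cI ^ (2 : ZMod 4).val) v = _
    rw [show (2 : ZMod 4).val = 2 from rfl, sq, IsometryEquiv.mul_apply, IsometryEquiv.mul_apply,
      cI_apply, cI_apply, t1I_apply]
    ext i
    fin_cases i <;>
      simp [rotE, E2_add_apply, Real.cos_pi, Real.sin_pi] <;> ring
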